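/- Let B > 0, T > 0 and M ∈ ℝ, and let V(θ) := (M²/(2B))·(1 − cos θ)/(1 + cos θ) − T·(1 − cos θ) for θ ∈ (−π, π), with m := M/√(B·T). (i) If 0 < m < 2 then the critical points of V in (0, π) are exactly the single point θ* = arccos(m − 1). (ii) If m ≥ 2 or M = 0 then θ = 0 is the only critical point of V in (−π, π). Thus the nontrivial (helical) equilibrium path exists exactly for loads 0 < m < 2, bifurcating subcritically from the trivial path at m = 2. -/

import Mathlib

lemma rod_cos_pos {x : ℝ} (h1 : -Real.pi < x) (h2 : x < Real.pi) : 0 < 1 + Real.cos x := by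
  have h : 0 < Real.cos (x/2) := Real.cos_pos_of_mem_Ioo ⟨by linarith, by linarith⟩
  have h2 := Real.cos_sq (x/2)
  rw [show 2*(x/2) = x by ring] at h2
  nlinarith

lemma rod_deriv (B T M θ : ℝ) (hB : 0 < B) (hc : 1 + Real.cos θ ≠ 0) :
    deriv (fun θ => M ^ 2 / (2 * B) * ((1 - Real.cos θ) / (1 + Real.cos θ)) - T * (1 - Real.cos θ)) θ
      = Real.sin θ * (M ^ 2 / (B * (1 + Real.cos θ) ^ 2) - T) := by
  have h1 : HasDerivAt (fun θ => 1 - Real.cos θ) (Real.sin θ) θ := by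
    simpa using (Real.hasDerivAt_cos θ).const_sub 1
  have h2 : HasDerivAt (fun θ => 1 + Real.cos θ) (-Real.sin θ) θ := by
    simpa using (Real.hasDerivAt_cos θ).const_add 1
  have h3 := (h1.div h2 hc).const_mul (M ^ 2 / (2 * B))
  have h4 := h3.sub (h1.const_mul T)
  rw [HasDerivAt.deriv (f := fun θ => M ^ 2 / (2 * B) * ((1 - Real.cos θ) / (1 + Real.cos θ)) - T * (1 - Real.cos θ)) h4]
  field_simp
  ring

/-- Critical points of the rod's equivalent-oscillator potential
`V(θ) = (M²/(2B))(1−cos θ)/(1+cos θ) − T(1−cos θ)` with `m = M/√(BT)`: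
(i) for `0 < m < 2` the unique critical point in `(0, π)` is
`θ* = arccos(m − 1)` (the helical path); (ii) for `m ≥ 2` or `M = 0` the only
critical point in `(−π, π)` is `θ = 0`. The helix thus exists exactly for
`0 < m < 2`, bifurcating subcritically at `m = 2`. -/
theorem rod_helical_critical_points
    (B T M : ℝ) (hB : 0 < B) (hT : 0 < T)
    (V : ℝ → ℝ)
    (hV : V = fun θ =>
      M ^ 2 / (2 * B) * ((1 - Real.cos θ) / (1 + Real.cos θ)) - T * (1 - Real.cos θ))
    (m : ℝ) (hm : m = M / Real.sqrt (B * T)) :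
    (0 < m → m < 2 →
      ∀ θ ∈ Set.Ioo (0 : ℝ) Real.pi, (deriv V θ = 0 ↔ θ = Real.arccos (m - 1))) ∧
    (2 ≤ m ∨ M = 0 →
      ∀ θ ∈ Set.Ioo (-Real.pi) Real.pi, (deriv V θ = 0 ↔ θ = 0)) := by
  have hBT : 0 < B * T := mul_pos hB hT
  have hs : 0 < Real.sqrt (B * T) := Real.sqrt_pos.2 hBT
  have hM2 : M ^ 2 = m ^ 2 * (B * T) := by
    rw [hm, div_pow, Real.sq_sqrt hBT.le]
    field_simp
  constructor
  · intro hm0 hm2 θ ⟨hθ0, hθπ⟩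
    have hneg : -Real.pi < θ := by linarith [Real.pi_pos]
    have hpos := rod_cos_pos hneg hθπ
    rw [hV, rod_deriv B T M θ hB hpos.ne']
    have hsin : 0 < Real.sin θ := Real.sin_pos_of_pos_of_lt_pi hθ0 hθπ
    constructor
    · intro h
      have hfac : M ^ 2 / (B * (1 + Real.cos θ) ^ 2) - T = 0 := by
        rcases mul_eq_zero.1 h with h | h
        · linarith
        · exact h
      have hne : B * (1 + Real.cos θ) ^ 2 ≠ 0 := by positivity
      have hM2' : M ^ 2 = T * (B * (1 + Real.cos θ) ^ 2) := by
        field_simp at hfac; linarith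
      have hsq : m ^ 2 = (1 + Real.cos θ) ^ 2 := by
        have h' : m ^ 2 * (B * T) = (1 + Real.cos θ) ^ 2 * (B * T) := by
          linear_combination hM2' - hM2
        exact mul_right_cancel₀ hBT.ne' h'
      have hc : Real.cos θ = m - 1 := by nlinarith
      rw [← hc, Real.arccos_cos hθ0.le hθπ.le]
    · intro h
      have hc : Real.cos θ = m - 1 := by
        rw [h]; exact Real.cos_arccos (by linarith) (by linarith)
      have : M ^ 2 / (B * (1 + Real.cos θ) ^ 2) - T = 0 := by
        rw [hc, hM2]
        have hne : B * (1 + (m - 1)) ^ 2 ≠ 0 := by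
          have h' : B * (1 + (m - 1)) ^ 2 = B * m ^ 2 := by ring
          rw [h']; exact (mul_pos hB (pow_pos hm0 2)).ne'
        rw [sub_eq_zero, div_eq_iff hne]
        ring
      rw [this, mul_zero]
  · intro hcase θ ⟨h1, h2⟩
    have hpos := rod_cos_pos h1 h2
    rw [hV, rod_deriv B T M θ hB hpos.ne']
    constructor
    · intro h
      rcases mul_eq_zero.1 h with h | h
      · exact (Real.sin_eq_zero_iff_of_lt_of_lt h1 h2).1 h
      · have hne : B * (1 + Real.cos θ) ^ 2 ≠ 0 := by positivity
        have hM2' : M ^ 2 = T * (B * (1 + Real.cos θ) ^ 2) := by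
          field_simp at h; linarith
        have hsq : m ^ 2 = (1 + Real.cos θ) ^ 2 := by
          have h' : m ^ 2 * (B * T) = (1 + Real.cos θ) ^ 2 * (B * T) := by
            linear_combination hM2' - hM2
          exact mul_right_cancel₀ hBT.ne' h'
        rcases hcase with hge | hM0
        · have hc1 : Real.cos θ = 1 := by
            have hle := Real.cos_le_one θ
            nlinarith [sq_nonneg (1 + Real.cos θ - 2)]
          exact (Real.cos_eq_one_iff_of_lt_of_lt (by linarith [Real.pi_pos])
            (by linarith [Real.pi_pos])).1 hc1
        · exfalso; rw [hM0] at hM2'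
          nlinarith [mul_pos (mul_pos hT hB) (pow_pos hpos 2)]
    · intro h
      rw [h]
      simp
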